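/- ε-insensitive loss dominance: fix x and a probability density p symmetric and unimodal around m (nonincreasing on [m,∞)), with cdf F. For ε ≥ 0 define R_ε(u) = ∫ ψ_ε(u−y) p(y) dy with ψ_ε(z) = max(|z|−ε, 0). Then R_ε is differentiable with R_ε'(u) = F(u−ε) − (1 − F(u+ε)), R_ε attains its minimum at m, and for all u ∈ ℝ: R_ε(u) − R_ε(m) ≤ R_0(u) − R_0(m). -/

import Mathlib

open MeasureTheory

open Set

section Aux

lemma psi_lip19 (ε a b : ℝ) : |max (|a| - ε) 0 - max (|b| - ε) 0| ≤ |a - b| :=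
  le_trans (by simpa using abs_max_sub_max_le_abs (|a| - ε) (|b| - ε) 0)
    (by simpa using abs_abs_sub_abs_le_abs_sub a b)

lemma psi_split19 {ε : ℝ} (hε : 0 ≤ ε) (z : ℝ) :
    max (|z| - ε) 0 = (|z - ε| + |z + ε|) / 2 - ε := by
  rcases abs_cases z with ⟨h1, h2⟩ | ⟨h1, h2⟩ <;>
    rcases abs_cases (z - ε) with ⟨h3, h4⟩ | ⟨h3, h4⟩ <;>
      rcases abs_cases (z + ε) with ⟨h5, h6⟩ | ⟨h5, h6⟩ <;>
        rcases max_cases (|z| - ε) 0 with ⟨h7, h8⟩ | ⟨h7, h8⟩ <;>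
          rw [h7] <;> linarith

variable (p : ℝ → ℝ) (m : ℝ)

lemma psi_int19 (hp0 : ∀ y, 0 ≤ p y) (hpm : Measurable p)
    (hpint : Integrable p) (hmoment : Integrable (fun y => |y| * p y)) (c ε : ℝ) :
    Integrable (fun y => max (|c - y| - ε) 0 * p y) := by
  have hmeas : Measurable fun y => max (|c - y| - ε) 0 * p y :=
    (((measurable_const.sub measurable_id).abs.sub measurable_const).max measurable_const).mul hpm
  refine Integrable.mono' (g := fun y => (|c| + |ε|) * p y + |y| * p y)
    ((hpint.const_mul _).add hmoment) hmeas.aestronglyMeasurable ?_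
  filter_upwards with y
  have h1 : |max (|c - y| - ε) 0| ≤ |c| + |y| + |ε| := by
    rw [abs_of_nonneg (le_max_right _ _)]
    have := abs_sub c y
    have := neg_abs_le ε
    rcases max_cases (|c - y| - ε) 0 with ⟨h, _⟩ | ⟨h, _⟩ <;> rw [h] <;>
      nlinarith [abs_nonneg c, abs_nonneg y, abs_nonneg ε]
  rw [Real.norm_eq_abs, abs_mul, abs_of_nonneg (hp0 y)]
  calc |max (|c - y| - ε) 0| * p y ≤ (|c| + |y| + |ε|) * p y :=
        mul_le_mul_of_nonneg_right h1 (hp0 y)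
    _ = (|c| + |ε|) * p y + |y| * p y := by ring

lemma refl_int19 (hsym : ∀ t : ℝ, p (m + t) = p (m - t)) (s : ℝ) :
    ∫ y in Iic (m - s), p y = ∫ y in Ici (m + s), p y := by
  have h2 : ∀ y : ℝ, p (2 * m - y) = p y := by
    intro y
    have := hsym (m - y)
    rw [show m + (m - y) = 2 * m - y by ring, show m - (m - y) = y by ring] at this
    exact this
  calc ∫ y in Iic (m - s), p y
      = ∫ y, (Iic (m - s)).indicator p y := (integral_indicator measurableSet_Iic).symm
    _ = ∫ y, (Iic (m - s)).indicator p (2 * m - y) :=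
        (integral_sub_left_eq_self _ volume (2 * m)).symm
    _ = ∫ y, (Ici (m + s)).indicator p y := by
        congr 1; ext y
        by_cases h : m + s ≤ y
        · rw [indicator_of_mem (show 2 * m - y ∈ Iic (m - s) by
              simp only [mem_Iic]; linarith) p,
            indicator_of_mem (mem_Ici.2 h), h2]
        · push_neg at h
          rw [indicator_of_notMem (show 2 * m - y ∉ Iic (m - s) by
              simp only [mem_Iic]; push_neg; linarith) p,
            indicator_of_notMem (by simpa using h)]
    _ = ∫ y in Ici (m + s), p y := integral_indicator measurableSet_Ici

lemma F_refl19 (hpint : Integrable p) (hp1 : (∫ y, p y) = 1)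
    (hsym : ∀ t : ℝ, p (m + t) = p (m - t)) (s : ℝ) :
    (∫ y in Iic (m + s), p y) + (∫ y in Iic (m - s), p y) = 1 := by
  rw [refl_int19 p m hsym s]
  have h1 : (∫ y in Iic (m + s), p y) = ∫ y in Iio (m + s), p y :=
    (setIntegral_congr_set Iio_ae_eq_Iic).symm
  rw [h1, intervalIntegral.integral_Iio_add_Ici hpint.integrableOn hpint.integrableOn, hp1]

lemma deriv_lem19 (hp0 : ∀ y, 0 ≤ p y) (hpm : Measurable p)
    (hpint : Integrable p) (hp1 : (∫ y, p y) = 1)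
    (hint : ∀ c e : ℝ, Integrable (fun y => max (|c - y| - e) 0 * p y))
    (ε : ℝ) (hε : 0 ≤ ε) (u : ℝ) :
    HasDerivAt (fun x => ∫ y, max (|x - y| - ε) 0 * p y)
      ((∫ y in Iic (u - ε), p y) - (1 - ∫ y in Iic (u + ε), p y)) u := by
  set F' : ℝ → ℝ := fun y => (Iio (u - ε)).indicator p y - (Ioi (u + ε)).indicator p y with hF'
  have hmeas : ∀ x : ℝ, AEStronglyMeasurable (fun y => max (|x - y| - ε) 0 * p y) volume :=
    fun x => ((((measurable_const.sub measurable_id).abs.sub measurable_const).max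
      measurable_const).mul hpm).aestronglyMeasurable
  have key := hasDerivAt_integral_of_dominated_loc_of_lip
    (F := fun x y => max (|x - y| - ε) 0 * p y)
    (F' := F') (bound := p) (Metric.ball_mem_nhds u one_pos)
    (Filter.Eventually.of_forall hmeas) (hint u ε)
    (((hpm.indicator measurableSet_Iio).sub
      (hpm.indicator measurableSet_Ioi)).aestronglyMeasurable)
    ?_ hpint ?_
  · have hval : (∫ y, F' y) = (∫ y in Iic (u - ε), p y) - (1 - ∫ y in Iic (u + ε), p y) := by
      rw [hF', integral_sub (hpint.indicator measurableSet_Iio)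
        (hpint.indicator measurableSet_Ioi),
        integral_indicator measurableSet_Iio, integral_indicator measurableSet_Ioi]
      have h1 : (∫ y in Iio (u - ε), p y) = ∫ y in Iic (u - ε), p y :=
        setIntegral_congr_set Iio_ae_eq_Iic
      have h2 : (∫ y in Iic (u + ε), p y) + (∫ y in Ioi (u + ε), p y) = 1 := by
        rw [intervalIntegral.integral_Iic_add_Ioi hpint.integrableOn hpint.integrableOn, hp1]
      rw [h1]; linarith
    rw [← hval]; exact key.2
  · refine Filter.Eventually.of_forall fun y => LipschitzOnWith.of_dist_le_mul fun x₁ _ x₂ _ => ?_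
    rw [Real.dist_eq, Real.dist_eq, Real.coe_nnabs, abs_of_nonneg (hp0 y), ← sub_mul, abs_mul,
      abs_of_nonneg (hp0 y), mul_comm (p y)]
    refine mul_le_mul_of_nonneg_right ?_ (hp0 y)
    have := psi_lip19 ε (x₁ - y) (x₂ - y)
    simpa [sub_sub_sub_cancel_right] using this
  · have h1 : ∀ᵐ y : ℝ, y ≠ u - ε := by
      refine ae_iff.2 ?_
      simpa using measure_singleton (u - ε)
    have h2 : ∀ᵐ y : ℝ, y ≠ u + ε := by
      refine ae_iff.2 ?_
      simpa using measure_singleton (u + ε)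
    filter_upwards [h1, h2] with y hy1 hy2
    rcases lt_trichotomy y (u - ε) with h | h | h
    · have hf : HasDerivAt (fun x : ℝ => (x - (y + ε)) * p y) (1 * p y) u :=
        ((hasDerivAt_id u).sub_const (y + ε)).mul_const (p y)
      have heq : (fun x : ℝ => max (|x - y| - ε) 0 * p y)
          =ᶠ[nhds u] fun x => (x - (y + ε)) * p y := by
        filter_upwards [eventually_gt_nhds (show y + ε < u by linarith)] with x hx
        rw [abs_of_pos (by linarith), max_eq_left (by linarith)]
        ring_nf
      have hd : HasDerivAt (fun x : ℝ => max (|x - y| - ε) 0 * p y) (1 * p y) u :=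
        hf.congr_of_eventuallyEq heq
      have hFv : F' y = 1 * p y := by
        rw [hF']; simp only [indicator_of_mem (mem_Iio.2 h),
          indicator_of_notMem (by simp only [mem_Ioi]; push_neg; linarith : y ∉ Ioi (u + ε))]
        ring
      rw [hFv]; exact hd
    · exact absurd h hy1
    · rcases lt_trichotomy y (u + ε) with h' | h' | h'
      · have hf : HasDerivAt (fun _ : ℝ => (0 : ℝ)) 0 u := hasDerivAt_const u 0
        have heq : (fun x : ℝ => max (|x - y| - ε) 0 * p y) =ᶠ[nhds u] fun _ => (0 : ℝ) := by
          have hev1 := eventually_gt_nhds (show y - ε < u by linarith)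
          have hev2 := eventually_lt_nhds (show u < y + ε by linarith)
          filter_upwards [hev1, hev2] with x hx1 hx2
          rw [max_eq_right (by cases abs_cases (x - y) with
            | inl hc => rw [hc.1]; linarith
            | inr hc => rw [hc.1]; linarith), zero_mul]
        have hd : HasDerivAt (fun x : ℝ => max (|x - y| - ε) 0 * p y) 0 u :=
          hf.congr_of_eventuallyEq heq
        have hFv : F' y = 0 := by
          rw [hF']; simp only [indicator_of_notMem
            (by simp only [mem_Iio]; push_neg; linarith : y ∉ Iio (u - ε)),
            indicator_of_notMem (by simp only [mem_Ioi]; push_neg; linarith : y ∉ Ioi (u + ε))]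
          ring
        rw [hFv]; exact hd
      · exact absurd h' hy2
      · have hf : HasDerivAt (fun x : ℝ => ((y - ε) - x) * p y) (-1 * p y) u := by
          simpa using (hasDerivAt_id' u).const_sub (y - ε) |>.mul_const (p y)
        have heq : (fun x : ℝ => max (|x - y| - ε) 0 * p y)
            =ᶠ[nhds u] fun x => ((y - ε) - x) * p y := by
          filter_upwards [eventually_lt_nhds (show u < y - ε by linarith)] with x hx
          rw [abs_of_neg (by linarith), max_eq_left (by linarith)]
          ring_nf
        have hd : HasDerivAt (fun x : ℝ => max (|x - y| - ε) 0 * p y) (-1 * p y) u :=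
          hf.congr_of_eventuallyEq heq
        have hFv : F' y = -1 * p y := by
          rw [hF']; simp only [indicator_of_notMem
            (by simp only [mem_Iio]; push_neg; linarith : y ∉ Iio (u - ε)),
            indicator_of_mem (mem_Ioi.2 h')]
          ring
        rw [hFv]; exact hd

lemma mass_le19 (hpint : Integrable p) {a b c : ℝ} (hab : a ≤ b)
    (hc : ∀ y ∈ Ioc a b, p y ≤ c) : ∫ y in Ioc a b, p y ≤ (b - a) * c := by
  have h1 : ∫ y in Ioc a b, p y ≤ ∫ _y in Ioc a b, c :=
    setIntegral_mono_on hpint.integrableOn (integrableOn_const (by simp))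
      measurableSet_Ioc hc
  calc ∫ y in Ioc a b, p y ≤ ∫ _y in Ioc a b, c := h1
    _ = (b - a) * c := by
        rw [setIntegral_const, Real.volume_real_Ioc_of_le hab, smul_eq_mul]

lemma mass_ge19 (hpint : Integrable p) {a b c : ℝ} (hab : a ≤ b)
    (hc : ∀ y ∈ Ioc a b, c ≤ p y) : (b - a) * c ≤ ∫ y in Ioc a b, p y := by
  have h1 : ∫ _y in Ioc a b, c ≤ ∫ y in Ioc a b, p y :=
    setIntegral_mono_on (integrableOn_const (by simp)) hpint.integrableOn
      measurableSet_Ioc hc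
  calc (b - a) * c = ∫ _y in Ioc a b, c := by
        rw [setIntegral_const, Real.volume_real_Ioc_of_le hab, smul_eq_mul]
    _ ≤ ∫ y in Ioc a b, p y := h1

lemma key_main19 (hpint : Integrable p)
    (hsym : ∀ t : ℝ, p (m + t) = p (m - t))
    (hunimodal : ∀ ⦃u v : ℝ⦄, m ≤ u → u ≤ v → p v ≤ p u)
    {t u : ℝ} (ht : 0 ≤ t) (hu : m ≤ u) :
    ∫ y in Ioc (u - t) (u + t), p y ≤ ∫ y in Ioc (m - t) (m + t), p y := by
  have h2 : ∀ y : ℝ, p (2 * m - y) = p y := by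
    intro y
    have := hsym (m - y)
    rw [show m + (m - y) = 2 * m - y by ring, show m - (m - y) = y by ring] at this
    exact this
  have hhigh : ∀ y, m + t ≤ y → p y ≤ p (m + t) :=
    fun y hy => hunimodal (by linarith) hy
  have hlow : ∀ y ∈ Ioc (m - t) (m + t), p (m + t) ≤ p y := by
    rintro y ⟨hy1, hy2⟩
    rcases le_total m y with h | h
    · exact hunimodal h hy2
    · rw [← h2 y]; exact hunimodal (by linarith) (by linarith)
  rcases le_or_gt (m + t) (u - t) with hcase | hcase
  · calc ∫ y in Ioc (u - t) (u + t), p y ≤ ((u + t) - (u - t)) * p (m + t) :=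
          mass_le19 p hpint (by linarith) (fun y hy => hhigh y (by linarith [hy.1]))
      _ = ((m + t) - (m - t)) * p (m + t) := by ring_nf
      _ ≤ ∫ y in Ioc (m - t) (m + t), p y := mass_ge19 p hpint (by linarith) hlow
  · have hsplit1 : ∫ y in Ioc (u - t) (u + t), p y =
        (∫ y in Ioc (u - t) (m + t), p y) + ∫ y in Ioc (m + t) (u + t), p y := by
      rw [← setIntegral_union (Ioc_disjoint_Ioc_of_le le_rfl) measurableSet_Ioc
        hpint.integrableOn hpint.integrableOn,
        Ioc_union_Ioc_eq_Ioc (by linarith) (by linarith)]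
    have hsplit2 : ∫ y in Ioc (m - t) (m + t), p y =
        (∫ y in Ioc (m - t) (u - t), p y) + ∫ y in Ioc (u - t) (m + t), p y := by
      rw [← setIntegral_union (Ioc_disjoint_Ioc_of_le le_rfl) measurableSet_Ioc
        hpint.integrableOn hpint.integrableOn,
        Ioc_union_Ioc_eq_Ioc (by linarith) (by linarith)]
    have hA : ∫ y in Ioc (m + t) (u + t), p y ≤ (u - m) * p (m + t) := by
      have := mass_le19 p hpint (show m + t ≤ u + t by linarith)
        (fun y hy => hhigh y (le_of_lt hy.1))
      calc ∫ y in Ioc (m + t) (u + t), p y ≤ ((u + t) - (m + t)) * p (m + t) := this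
        _ = (u - m) * p (m + t) := by ring_nf
    have hB : (u - m) * p (m + t) ≤ ∫ y in Ioc (m - t) (u - t), p y := by
      have := mass_ge19 p hpint (show m - t ≤ u - t by linarith)
        (fun y hy => hlow y ⟨hy.1, by linarith [hy.2]⟩)
      calc (u - m) * p (m + t) = ((u - t) - (m - t)) * p (m + t) := by ring_nf
        _ ≤ ∫ y in Ioc (m - t) (u - t), p y := this
    rw [hsplit1, hsplit2]
    linarith

lemma key_F19 (hpint : Integrable p) (hp1 : (∫ y, p y) = 1)
    (hsym : ∀ t : ℝ, p (m + t) = p (m - t))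
    (hunimodal : ∀ ⦃u v : ℝ⦄, m ≤ u → u ≤ v → p v ≤ p u)
    {t : ℝ} (ht : 0 ≤ t) (u : ℝ) :
    (∫ y in Iic (u + t), p y) - (∫ y in Iic (u - t), p y) ≤
      (∫ y in Iic (m + t), p y) - (∫ y in Iic (m - t), p y) := by
  have hIoc : ∀ v : ℝ, (∫ y in Iic (v + t), p y) - (∫ y in Iic (v - t), p y)
      = ∫ y in Ioc (v - t) (v + t), p y := by
    intro v
    rw [intervalIntegral.integral_Iic_sub_Iic hpint.integrableOn hpint.integrableOn,
      intervalIntegral.integral_of_le (by linarith)]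
  rcases le_total m u with h | h
  · rw [hIoc u, hIoc m]
    exact key_main19 p m hpint hsym hunimodal ht h
  · have e1 : (∫ y in Iic (u + t), p y) = 1 - ∫ y in Iic (2 * m - u - t), p y := by
      have := F_refl19 p m hpint hp1 hsym (m - u - t)
      rw [show m - (m - u - t) = u + t by ring,
        show m + (m - u - t) = 2 * m - u - t by ring] at this
      linarith
    have e2 : (∫ y in Iic (u - t), p y) = 1 - ∫ y in Iic (2 * m - u + t), p y := by
      have := F_refl19 p m hpint hp1 hsym (m - u + t)
      rw [show m - (m - u + t) = u - t by ring,
        show m + (m - u + t) = 2 * m - u + t by ring] at this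
      linarith
    rw [e1, e2]
    have h3 : (∫ y in Iic ((2 * m - u) + t), p y) - (∫ y in Iic ((2 * m - u) - t), p y)
        ≤ (∫ y in Iic (m + t), p y) - (∫ y in Iic (m - t), p y) := by
      rw [hIoc (2 * m - u), hIoc m]
      exact key_main19 p m hpint hsym hunimodal ht (by linarith)
    have h4 : 2 * m - u + t = (2 * m - u) + t := by ring
    have h5 : 2 * m - u - t = (2 * m - u) - t := by ring
    rw [h4, h5]
    linarith

end Aux

/-- ε-insensitive loss dominance: let `p` be a probability density symmetric and
unimodal around `m` (nonincreasing on `[m,∞)`), with cdf `F`, a finite first moment,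
and `R ε u = ∫ ψ_ε(u - y) p y dy` where `ψ_ε z = max (|z| - ε) 0`. Then for each
`ε ≥ 0`: `R ε` is differentiable with `R_ε'(u) = F(u-ε) - (1 - F(u+ε))`, `R ε` attains
its minimum at `m`, and `R ε u - R ε m ≤ R 0 u - R 0 m` for all `u`. -/
theorem stmt_19 (p : ℝ → ℝ) (m : ℝ)
    (hp0 : ∀ y, 0 ≤ p y) (hpm : Measurable p)
    (hpint : Integrable p) (hp1 : (∫ y, p y) = 1)
    (hmoment : Integrable (fun y => |y| * p y))
    (hsym : ∀ t : ℝ, p (m + t) = p (m - t))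
    (hunimodal : ∀ ⦃u v : ℝ⦄, m ≤ u → u ≤ v → p v ≤ p u)
    (F : ℝ → ℝ) (hF : ∀ u, F u = ∫ y in Set.Iic u, p y)
    (R : ℝ → ℝ → ℝ) (hR : ∀ ε u, R ε u = ∫ y, max (|u - y| - ε) 0 * p y) :
    ∀ ε : ℝ, 0 ≤ ε →
      (∀ u, HasDerivAt (R ε) (F (u - ε) - (1 - F (u + ε))) u) ∧
      (∀ u, R ε m ≤ R ε u) ∧
      (∀ u, R ε u - R ε m ≤ R 0 u - R 0 m) := by
  have hint : ∀ c e : ℝ, Integrable (fun y => max (|c - y| - e) 0 * p y) :=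
    psi_int19 p hp0 hpm hpint hmoment
  have habs : ∀ c : ℝ, Integrable (fun y => |c - y| * p y) := by
    intro c
    have := hint c 0
    simpa using this
  have hR0 : ∀ v, R 0 v = ∫ y, |v - y| * p y := by
    intro v
    rw [hR]
    congr 1; funext y; rw [sub_zero, max_eq_left (abs_nonneg _)]
  -- the derivative, for any e ≥ 0
  have hDer : ∀ e : ℝ, 0 ≤ e → ∀ u, HasDerivAt (R e) (F (u - e) - (1 - F (u + e))) u := by
    intro e he u
    have hfun : R e = fun x => ∫ y, max (|x - y| - e) 0 * p y := funext (hR e)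
    rw [hfun, hF, hF]
    exact deriv_lem19 p hp0 hpm hpint hp1 hint e he u
  have hFrefl : ∀ s : ℝ, F (m + s) + F (m - s) = 1 := by
    intro s
    rw [hF, hF]
    exact F_refl19 p m hpint hp1 hsym s
  have hFmono : Monotone F := by
    intro a b hab
    rw [hF, hF]
    exact setIntegral_mono_set hpint.integrableOn
      (Filter.Eventually.of_forall hp0)
      ((Iic_subset_Iic.2 hab).eventuallyLE)
  have hDmono : ∀ e : ℝ, Monotone (fun t => F (t - e) - (1 - F (t + e))) := by
    intro e a b hab
    have h1 := hFmono (sub_le_sub_right hab e)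
    have h2 := hFmono (add_le_add_left hab e)
    dsimp only
    linarith
  have hDii : ∀ e a b : ℝ,
      IntervalIntegrable (fun t => F (t - e) - (1 - F (t + e))) volume a b :=
    fun e a b => (hDmono e).intervalIntegrable
  have hFTC : ∀ e : ℝ, 0 ≤ e → ∀ a b : ℝ,
      (∫ t in a..b, (F (t - e) - (1 - F (t + e)))) = R e b - R e a := by
    intro e he a b
    exact intervalIntegral.integral_eq_sub_of_hasDerivAt (fun t _ => hDer e he t) (hDii e a b)
  intro ε hε
  refine ⟨hDer ε hε, ?_, ?_⟩
  · -- minimality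
    intro u
    have hDm : F (m - ε) - (1 - F (m + ε)) = 0 := by
      have := hFrefl ε
      linarith
    rcases le_total m u with h | h
    · have hnn : 0 ≤ ∫ t in m..u, (F (t - ε) - (1 - F (t + ε))) := by
        refine intervalIntegral.integral_nonneg h fun t ht => ?_
        have h2 : F (m - ε) - (1 - F (m + ε)) ≤ F (t - ε) - (1 - F (t + ε)) := hDmono ε ht.1
        linarith
      rw [hFTC ε hε m u] at hnn
      linarith
    · have hnp : (∫ t in u..m, (F (t - ε) - (1 - F (t + ε)))) ≤ ∫ t in u..m, (0 : ℝ) := by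
        refine intervalIntegral.integral_mono_on h (hDii ε u m)
          intervalIntegrable_const fun t ht => ?_
        have h2 : F (t - ε) - (1 - F (t + ε)) ≤ F (m - ε) - (1 - F (m + ε)) := hDmono ε ht.2
        linarith
      rw [hFTC ε hε u m, intervalIntegral.integral_zero] at hnp
      linarith
  · -- dominance
    intro u
    -- splitting identity
    have hsplitR : ∀ v : ℝ, R ε v = (R 0 (v - ε) + R 0 (v + ε)) / 2 - ε := by
      intro v
      rw [hR, hR0, hR0]
      have hintg : (fun y => max (|v - y| - ε) 0 * p y)
          = fun y => (|v - ε - y| * p y + |v + ε - y| * p y) / 2 - ε * p y := by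
        funext y
        have hh := psi_split19 hε (v - y)
        rw [show v - y - ε = v - ε - y by ring, show v - y + ε = v + ε - y by ring] at hh
        rw [hh]; ring
      have h1 : Integrable (fun y => (|v - ε - y| * p y + |v + ε - y| * p y) / 2) := by
        exact ((habs (v - ε)).add (habs (v + ε))).div_const 2
      rw [hintg, integral_sub h1 (hpint.const_mul ε), integral_div,
        integral_add (habs (v - ε)) (habs (v + ε)), integral_const_mul, hp1, mul_one]
    have hFTC0 : ∀ a b : ℝ, (∫ t in a..b, (F t - (1 - F t))) = R 0 b - R 0 a := by
      intro a b
      have := hFTC 0 le_rfl a b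
      simpa using this
    have hii1 : ∀ v : ℝ, IntervalIntegrable (fun t => F (v + t) - (1 - F (v + t))) volume 0 ε := by
      intro v
      refine Monotone.intervalIntegrable fun a b hab => ?_
      have := hFmono (add_le_add_right hab v)
      show F (v + a) - (1 - F (v + a)) ≤ F (v + b) - (1 - F (v + b))
      linarith
    have hii2 : ∀ v : ℝ, IntervalIntegrable (fun t => F (v - t) - (1 - F (v - t))) volume 0 ε := by
      intro v
      refine Antitone.intervalIntegrable fun a b hab => ?_
      have := hFmono (sub_le_sub_left hab v)
      show F (v - b) - (1 - F (v - b)) ≤ F (v - a) - (1 - F (v - a))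
      linarith
    have hcomp : ∀ v : ℝ,
        (∫ t in (0:ℝ)..ε, ((F (v + t) - (1 - F (v + t))) - (F (v - t) - (1 - F (v - t)))))
          = (R 0 (v + ε) - R 0 v) - (R 0 v - R 0 (v - ε)) := by
      intro v
      rw [intervalIntegral.integral_sub (hii1 v) (hii2 v)]
      have e1 : (∫ t in (0:ℝ)..ε, (F (v + t) - (1 - F (v + t)))) = R 0 (v + ε) - R 0 v := by
        have := intervalIntegral.integral_comp_add_left (a := (0:ℝ)) (b := ε)
          (f := fun t => F t - (1 - F t)) v
        rw [this, add_zero, hFTC0]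
      have e2 : (∫ t in (0:ℝ)..ε, (F (v - t) - (1 - F (v - t)))) = R 0 v - R 0 (v - ε) := by
        have := intervalIntegral.integral_comp_sub_left (a := (0:ℝ)) (b := ε)
          (f := fun t => F t - (1 - F t)) v
        rw [this, sub_zero, hFTC0]
      rw [e1, e2]
    have hmono : (∫ t in (0:ℝ)..ε,
          ((F (u + t) - (1 - F (u + t))) - (F (u - t) - (1 - F (u - t)))))
        ≤ ∫ t in (0:ℝ)..ε,
          ((F (m + t) - (1 - F (m + t))) - (F (m - t) - (1 - F (m - t)))) := by
      refine intervalIntegral.integral_mono_on hε ((hii1 u).sub (hii2 u))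
        ((hii1 m).sub (hii2 m)) fun t ht => ?_
      have hk : F (u + t) - F (u - t) ≤ F (m + t) - F (m - t) := by
        rw [hF (u + t), hF (u - t), hF (m + t), hF (m - t)]
        exact key_F19 p m hpint hp1 hsym hunimodal ht.1 u
      linarith
    rw [hcomp u, hcomp m] at hmono
    have hsu := hsplitR u
    have hsm := hsplitR m
    linarith
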